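/- Let a = (a₀,…,aₙ) with integers a_k ≥ 2 and let Σ_a = {z ∈ ℂ^{n+1} : ∑ z_k^{a_k} = 0, ‖z‖ = 1}. Define the real 1-form λ_a by λ_a(z)(ξ) = (1/4)·∑_{k} a_k·Im(z_k·conj(ξ_k)), the real 2-form ω_a by ω_a(ξ, ζ) = −(1/2)·∑_k a_k·Im(ξ_k·conj(ζ_k)), and R_a(z) = 4i·(z₀/a₀, …, zₙ/aₙ). Then for every z ∈ Σ_a: (1) R_a(z) is tangent to Σ_a at z; (2) λ_a(z)(R_a(z)) = 1; and (3) ω_a(R_a(z), ξ) = 0 for every ξ tangent to Σ_a at z. -/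

import Mathlib

/-- The Reeb vector field `R_a(z) = 4i (z₀/a₀, …, zₙ/aₙ)` on the Brieskorn manifold. -/
noncomputable def Ra (n : ℕ) (a : Fin (n + 1) → ℕ) (z : Fin (n + 1) → ℂ) : Fin (n + 1) → ℂ :=
  fun k => 4 * Complex.I * z k / (a k : ℂ)

/-- On the Brieskorn manifold `Σ_a`: (1) `R_a` is tangent to `Σ_a`; (2) `λ_a(R_a) = 1`;
(3) `ω_a(R_a, ξ) = 0` for every tangent vector `ξ`.  Here tangency of `ξ` at `z` means
`∑ a_k z_k^{a_k-1} ξ_k = 0` and `∑ (conj z_k · ξ_k + z_k · conj ξ_k) = 0`, the contact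
form is `λ_a(z)(ξ) = (1/4) ∑ a_k Im(conj z_k · ξ_k)` and the symplectic form is
`ω_a(ξ,ζ) = -(1/2) ∑ a_k Im(ξ_k · conj ζ_k)`. -/
theorem stmt7 (n : ℕ) (a : Fin (n + 1) → ℕ) (ha : ∀ k, 2 ≤ a k)
    (z : Fin (n + 1) → ℂ) (hz1 : ∑ k, z k ^ a k = 0)
    (hz2 : ∑ k, Complex.normSq (z k) = 1) :
    ((∑ k, (a k : ℂ) * z k ^ (a k - 1) * Ra n a z k = 0) ∧
      (∑ k, ((starRingEnd ℂ) (z k) * Ra n a z k + z k * (starRingEnd ℂ) (Ra n a z k)) = 0)) ∧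
    ((1 / 4 : ℝ) * ∑ k, (a k : ℝ) * ((starRingEnd ℂ) (z k) * Ra n a z k).im = 1) ∧
    (∀ ξ : Fin (n + 1) → ℂ,
      (∑ k, (a k : ℂ) * z k ^ (a k - 1) * ξ k = 0) →
      (∑ k, ((starRingEnd ℂ) (z k) * ξ k + z k * (starRingEnd ℂ) (ξ k)) = 0) →
      (-(1 / 2 : ℝ)) * ∑ k, (a k : ℝ) * (Ra n a z k * (starRingEnd ℂ) (ξ k)).im = 0) := by
  have hane : ∀ k, (a k : ℂ) ≠ 0 := fun k =>
    Nat.cast_ne_zero.mpr (by have := ha k; omega)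
  have hmul : ∀ k, (a k : ℂ) * Ra n a z k = 4 * Complex.I * z k := by
    intro k
    simp only [Ra]
    rw [mul_div_assoc', mul_comm ((a k : ℂ)), mul_div_assoc]
    rw [div_self (hane k), mul_one]
  refine ⟨⟨?_, ?_⟩, ?_, ?_⟩
  · have h1 : ∀ k ∈ Finset.univ, (a k : ℂ) * z k ^ (a k - 1) * Ra n a z k
        = 4 * Complex.I * z k ^ a k := by
      intro k _
      have hp : z k ^ (a k - 1) * z k = z k ^ a k := by
        rw [← pow_succ]
        congr 1
        have := ha k; omega
      calc (a k : ℂ) * z k ^ (a k - 1) * Ra n a z k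
          = z k ^ (a k - 1) * ((a k : ℂ) * Ra n a z k) := by ring
        _ = z k ^ (a k - 1) * (4 * Complex.I * z k) := by rw [hmul]
        _ = 4 * Complex.I * (z k ^ (a k - 1) * z k) := by ring
        _ = 4 * Complex.I * z k ^ a k := by rw [hp]
    rw [Finset.sum_congr rfl h1, ← Finset.mul_sum, hz1, mul_zero]
  · apply Finset.sum_eq_zero
    intro k _
    simp only [Ra, map_div₀, map_mul, Complex.conj_I, Complex.conj_natCast,
      Complex.conj_ofNat]
    field_simp
    ring
  · have h1 : ∀ k ∈ Finset.univ, (a k : ℝ) * ((starRingEnd ℂ) (z k) * Ra n a z k).im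
        = 4 * Complex.normSq (z k) := by
      intro k _
      have : ((a k : ℂ) * ((starRingEnd ℂ) (z k) * Ra n a z k)).im
          = (4 * Complex.I * ((starRingEnd ℂ) (z k) * z k)).im := by
        rw [show (a k : ℂ) * ((starRingEnd ℂ) (z k) * Ra n a z k)
            = (starRingEnd ℂ) (z k) * ((a k : ℂ) * Ra n a z k) by ring, hmul]
        ring_nf
      rw [show ((a k : ℂ) * ((starRingEnd ℂ) (z k) * Ra n a z k)).im
          = (a k : ℝ) * ((starRingEnd ℂ) (z k) * Ra n a z k).im by
        simp [Complex.mul_im]] at this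
      rw [this]
      simp [Complex.mul_im, Complex.mul_re, Complex.normSq_apply]
      try ring
    rw [Finset.sum_congr rfl h1, ← Finset.mul_sum, hz2]
    norm_num
  · intro ξ hξ1 hξ2
    have key : ∀ k ∈ Finset.univ, (a k : ℝ) * (Ra n a z k * (starRingEnd ℂ) (ξ k)).im
        = 2 * ((starRingEnd ℂ) (z k) * ξ k + z k * (starRingEnd ℂ) (ξ k)).re := by
      intro k _
      have h2 : ((a k : ℂ) * (Ra n a z k * (starRingEnd ℂ) (ξ k))).im
          = (4 * Complex.I * (z k * (starRingEnd ℂ) (ξ k))).im := by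
        rw [show (a k : ℂ) * (Ra n a z k * (starRingEnd ℂ) (ξ k))
            = ((a k : ℂ) * Ra n a z k) * (starRingEnd ℂ) (ξ k) by ring, hmul]
        ring_nf
      rw [show ((a k : ℂ) * (Ra n a z k * (starRingEnd ℂ) (ξ k))).im
          = (a k : ℝ) * (Ra n a z k * (starRingEnd ℂ) (ξ k)).im by
        simp [Complex.mul_im]] at h2
      rw [h2]
      simp [Complex.mul_im, Complex.mul_re, Complex.add_re]
      ring
    rw [Finset.sum_congr rfl key, ← Finset.mul_sum, ← Complex.re_sum, hξ2]
    norm_num
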